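/- For q ≠ 0, the profit intensity ρ(a) := (-∫_{-∞}^{-a} p·pdf(p) dp) / (1 + ∫_{-∞}^{-a} pdf(p) dp), with pdf(p) = e^{-p²}(2p² + 2q² - 1)/(2√π q²), has the closed form ρ(a) = (e^{-a²}(2a² + 2q² + 1)) / (4√π q² + 2a·e^{-a²} + 2√π q²·erfc(a)). -/

import Mathlib

open MeasureTheory Real Set Filter Topology

lemma intg_pow (n : ℕ) : Integrable (fun x : ℝ => x ^ n * Real.exp (-x ^ 2)) := by
  have h := integrable_rpow_mul_exp_neg_mul_sq (b := 1) one_pos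
      (s := (n : ℝ)) (lt_of_lt_of_le neg_one_lt_zero (Nat.cast_nonneg n))
  simpa [Real.rpow_natCast] using h

lemma tend_pow (n : ℕ) :
    Tendsto (fun x : ℝ => x ^ n * Real.exp (-x ^ 2)) atBot (𝓝 0) := by
  have h := (tendsto_rpow_abs_mul_exp_neg_mul_sq_cocompact one_pos
      (n : ℝ)).mono_left _root_.atBot_le_cocompact
  refine squeeze_zero_norm (fun x => ?_) h
  have hx : |x| ^ ((n : ℕ) : ℝ) = |x| ^ n := Real.rpow_natCast _ n
  rw [norm_mul, Real.norm_eq_abs, Real.norm_eq_abs, abs_pow,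
    Real.abs_exp, hx, neg_one_mul]

lemma I1 (b c : ℝ) :
    ∫ p in Iic b, p * Real.exp (-p ^ 2) * (2 * p ^ 2 + 2 * c - 1)
      = -(Real.exp (-b ^ 2) * (b ^ 2 + c + 1 / 2)) := by
  have hderiv : ∀ x ∈ Iic b, HasDerivAt
      (fun p : ℝ => -(Real.exp (-p ^ 2) * (p ^ 2 + c + 1 / 2)))
      (x * Real.exp (-x ^ 2) * (2 * x ^ 2 + 2 * c - 1)) x := by
    intro x _
    have h1 : HasDerivAt (fun p : ℝ => -p ^ 2) (-(2 * x)) x := by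
      simpa using (hasDerivAt_pow 2 x).fun_neg
    have h2 : HasDerivAt (fun p : ℝ => Real.exp (-p ^ 2))
        (Real.exp (-x ^ 2) * -(2 * x)) x := (Real.hasDerivAt_exp _).comp x h1
    have h3 : HasDerivAt (fun p : ℝ => p ^ 2 + c + 1 / 2) (2 * x) x := by
      simpa using ((hasDerivAt_pow 2 x).add_const c).add_const (1 / 2)
    have h4 : HasDerivAt (fun p : ℝ => -(Real.exp (-p ^ 2) * (p ^ 2 + c + 1 / 2)))
        (-(Real.exp (-x ^ 2) * -(2 * x) * (x ^ 2 + c + 1 / 2) + Real.exp (-x ^ 2) * (2 * x))) x :=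
      (h2.mul h3).fun_neg
    convert h4 using 1
    ring
  have hint : IntegrableOn
      (fun x : ℝ => x * Real.exp (-x ^ 2) * (2 * x ^ 2 + 2 * c - 1)) (Iic b) := by
    have he : (fun x : ℝ => x * Real.exp (-x ^ 2) * (2 * x ^ 2 + 2 * c - 1))
        = fun x => 2 * (x ^ 3 * Real.exp (-x ^ 2)) + (2 * c - 1) * (x ^ 1 * Real.exp (-x ^ 2)) := by
      funext x; ring
    rw [he]
    exact (((intg_pow 3).const_mul 2).add ((intg_pow 1).const_mul (2 * c - 1))).integrableOn
  have htend : Tendsto (fun p : ℝ => -(Real.exp (-p ^ 2) * (p ^ 2 + c + 1 / 2)))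
      atBot (𝓝 0) := by
    have h := ((tend_pow 2).add ((tend_pow 0).const_mul (c + 1 / 2))).neg
    simp only [mul_zero, add_zero, zero_add, neg_zero] at h
    refine h.congr fun x => ?_
    simp only [pow_zero, one_mul]
    ring
  rw [integral_Iic_of_hasDerivAt_of_tendsto' hderiv hint htend]
  ring

lemma I2 (b : ℝ) :
    ∫ p in Iic b, Real.exp (-p ^ 2) * (2 * p ^ 2 - 1) = -(b * Real.exp (-b ^ 2)) := by
  have hderiv : ∀ x ∈ Iic b, HasDerivAt
      (fun p : ℝ => -(p * Real.exp (-p ^ 2)))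
      (Real.exp (-x ^ 2) * (2 * x ^ 2 - 1)) x := by
    intro x _
    have h1 : HasDerivAt (fun p : ℝ => -p ^ 2) (-(2 * x)) x := by
      simpa using (hasDerivAt_pow 2 x).fun_neg
    have h2 : HasDerivAt (fun p : ℝ => Real.exp (-p ^ 2))
        (Real.exp (-x ^ 2) * -(2 * x)) x := (Real.hasDerivAt_exp _).comp x h1
    have h4 : HasDerivAt (fun p : ℝ => -(p * Real.exp (-p ^ 2)))
        (-(1 * Real.exp (-x ^ 2) + x * (Real.exp (-x ^ 2) * -(2 * x)))) x :=
      ((hasDerivAt_id x).mul h2).fun_neg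
    convert h4 using 1
    ring
  have hint : IntegrableOn
      (fun x : ℝ => Real.exp (-x ^ 2) * (2 * x ^ 2 - 1)) (Iic b) := by
    have he : (fun x : ℝ => Real.exp (-x ^ 2) * (2 * x ^ 2 - 1))
        = fun x => 2 * (x ^ 2 * Real.exp (-x ^ 2)) + (-1) * (x ^ 0 * Real.exp (-x ^ 2)) := by
      funext x; ring
    rw [he]
    exact (((intg_pow 2).const_mul 2).add ((intg_pow 0).const_mul (-1))).integrableOn
  have htend : Tendsto (fun p : ℝ => -(p * Real.exp (-p ^ 2))) atBot (𝓝 0) := by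
    have h := (tend_pow 1).neg
    rw [neg_zero] at h
    exact h.congr fun x => by rw [pow_one]
  rw [integral_Iic_of_hasDerivAt_of_tendsto' hderiv hint htend]
  ring

noncomputable def erfc (a : ℝ) : ℝ :=
  (2 / Real.sqrt Real.pi) * ∫ t in Set.Ioi a, Real.exp (-t^2)

noncomputable def pdf (q p : ℝ) : ℝ :=
  Real.exp (-p^2) * (2*p^2 + 2*q^2 - 1) / (2 * Real.sqrt Real.pi * q^2)

noncomputable def ρ (q a : ℝ) : ℝ :=
  (-∫ p in Set.Iic (-a), p * pdf q p) / (1 + ∫ p in Set.Iic (-a), pdf q p)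

theorem stmt_9 (q : ℝ) (hq : q ≠ 0) (a : ℝ) :
    ρ q a = (Real.exp (-a^2) * (2*a^2 + 2*q^2 + 1)) /
      (4 * Real.sqrt Real.pi * q^2 + 2*a*Real.exp (-a^2)
        + 2 * Real.sqrt Real.pi * q^2 * erfc a) := by
  have hs : Real.sqrt Real.pi ≠ 0 := ne_of_gt (Real.sqrt_pos.mpr Real.pi_pos)
  have hb : 2 * Real.sqrt Real.pi * q ^ 2 ≠ 0 := by positivity
  have herfc : ∫ t in Set.Ioi a, Real.exp (-t ^ 2) = Real.sqrt Real.pi * erfc a / 2 := by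
    rw [erfc]; field_simp
  have hgauss : ∫ p in Iic (-a), Real.exp (-p ^ 2) = Real.sqrt Real.pi * erfc a / 2 := by
    rw [← herfc, ← integral_comp_neg_Ioi a (fun x => Real.exp (-x ^ 2))]
    congr 1; funext x; rw [show ((-x : ℝ)) ^ 2 = x ^ 2 by ring]
  -- numerator integral
  have hnum : ∫ p in Iic (-a), p * pdf q p
      = -(Real.exp (-a ^ 2) * (a ^ 2 + q ^ 2 + 1 / 2)) / (2 * Real.sqrt Real.pi * q ^ 2) := by
    have hfun : (fun p : ℝ => p * pdf q p)
        = fun p => (p * Real.exp (-p ^ 2) * (2 * p ^ 2 + 2 * q ^ 2 - 1))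
            / (2 * Real.sqrt Real.pi * q ^ 2) := by
      funext p; simp only [_root_.pdf]; ring
    rw [hfun, integral_div, I1 (-a) (q ^ 2), show ((-a : ℝ)) ^ 2 = a ^ 2 by ring]
  -- denominator integral
  have hden : ∫ p in Iic (-a), pdf q p
      = (a * Real.exp (-a ^ 2) + q ^ 2 * (Real.sqrt Real.pi * erfc a))
          / (2 * Real.sqrt Real.pi * q ^ 2) := by
    have hfun : (fun p : ℝ => pdf q p)
        = fun p => (Real.exp (-p ^ 2) * (2 * p ^ 2 - 1) + 2 * q ^ 2 * Real.exp (-p ^ 2))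
            / (2 * Real.sqrt Real.pi * q ^ 2) := by
      funext p; simp only [_root_.pdf]; ring
    have hint1 : IntegrableOn
        (fun x : ℝ => Real.exp (-x ^ 2) * (2 * x ^ 2 - 1)) (Iic (-a)) := by
      have he : (fun x : ℝ => Real.exp (-x ^ 2) * (2 * x ^ 2 - 1))
          = fun x => 2 * (x ^ 2 * Real.exp (-x ^ 2)) + (-1) * (x ^ 0 * Real.exp (-x ^ 2)) := by
        funext x; ring
      rw [he]
      exact (((intg_pow 2).const_mul 2).add ((intg_pow 0).const_mul (-1))).integrableOn
    have hint2 : IntegrableOn (fun x : ℝ => 2 * q ^ 2 * Real.exp (-x ^ 2)) (Iic (-a)) := by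
      have he : (fun x : ℝ => 2 * q ^ 2 * Real.exp (-x ^ 2))
          = fun x => 2 * q ^ 2 * (x ^ 0 * Real.exp (-x ^ 2)) := by
        funext x; ring
      rw [he]
      exact ((intg_pow 0).const_mul (2 * q ^ 2)).integrableOn
    rw [hfun, integral_div, integral_add hint1 hint2, I2 (-a)]
    have : ∫ p in Iic (-a), 2 * q ^ 2 * Real.exp (-p ^ 2)
        = 2 * q ^ 2 * (Real.sqrt Real.pi * erfc a / 2) := by
      rw [integral_const_mul, hgauss]
    rw [this, show ((-a : ℝ)) ^ 2 = a ^ 2 by ring]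
    ring
  rw [ρ, hnum, hden]
  rcases eq_or_ne (4 * Real.sqrt Real.pi * q ^ 2 + 2 * a * Real.exp (-a ^ 2)
      + 2 * Real.sqrt Real.pi * q ^ 2 * erfc a) 0 with h0 | h0
  · rw [h0, div_zero]
    have h2 : a * Real.exp (-a ^ 2) + q ^ 2 * (Real.sqrt Real.pi * erfc a)
        = -(2 * Real.sqrt Real.pi * q ^ 2) := by linear_combination h0 / 2
    have hden0 : (1 : ℝ) + -(2 * Real.sqrt Real.pi * q ^ 2) / (2 * Real.sqrt Real.pi * q ^ 2) = 0 := by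
      rw [neg_div, div_self hb]; ring
    rw [h2, hden0, div_zero]
  · have h1 : 2 * Real.sqrt Real.pi * q ^ 2
        + (a * Real.exp (-a ^ 2) + q ^ 2 * (Real.sqrt Real.pi * erfc a)) ≠ 0 := by
      intro h; exact h0 (by linear_combination 2 * h)
    field_simp
    rw [show q ^ 2 * √π * 4 + a * rexp (-a ^ 2) * 2 + q ^ 2 * 2 * √π * erfc a
        = 2 * (q ^ 2 * 2 * √π + (a * rexp (-a ^ 2) + q ^ 2 * √π * erfc a)) by ring,
      ← div_div, div_self two_ne_zero]
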